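/- Let R be a ring such that every flat R-module is projective (i.e., R is perfect) and with finite Gorenstein global dimension n. If N admits a short exact sequence 0 → N → F → N → 0 with F flat, then Ext^1_R(N, P) = 0 for every projective R-module P, so N is strongly Gorenstein projective. -/

import Mathlib

universe u

open LinearMap DirectSum

section Defs

variable (R : Type u) [CommRing R]

/-- `Ext¹_R(M, Q) = 0`, expressed by the splitting of all extensions of `M` by `Q`. -/
def Ext1Zero (M Q : Type u) [AddCommGroup M] [Module R M] [AddCommGroup Q] [Module R Q] :
    Prop :=
  ∀ (E : ModuleCat.{u} R) (i : Q →ₗ[R] E) (p : E →ₗ[R] M),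
    Function.Injective i → Function.Surjective p → LinearMap.range i = LinearMap.ker p →
      ∃ s : M →ₗ[R] E, p ∘ₗ s = LinearMap.id

/-- `Tor₁^R(M, N) = 0`, expressed via flat presentations of `N`:
for every surjection `p : F ↠ N` with `F` flat, `ker p ⊗ M → F ⊗ M` is injective. -/
def Tor1Zero (M N : Type u) [AddCommGroup M] [Module R M] [AddCommGroup N] [Module R N] :
    Prop :=
  ∀ (F : ModuleCat.{u} R), Module.Flat R F →
    ∀ p : F →ₗ[R] N, Function.Surjective p →
      Function.Injective (LinearMap.rTensor M (LinearMap.ker p).subtype)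

/-- `M` is strongly Gorenstein projective: there is an exact complex
`⋯ → P → P → P → ⋯` with a single projective `P` and single differential `f`,
which stays exact under `Hom(-, Q)` for every projective `Q`, and `M ≅ Im f`. -/
def IsSGProjective (M : Type u) [AddCommGroup M] [Module R M] : Prop :=
  ∃ P : ModuleCat.{u} R, Module.Projective R P ∧
    ∃ f : P →ₗ[R] P, f ∘ₗ f = 0 ∧ LinearMap.ker f = LinearMap.range f ∧
      Nonempty (M ≃ₗ[R] LinearMap.range f) ∧
      ∀ Q : ModuleCat.{u} R, Module.Projective R Q →
        ∀ g : P →ₗ[R] Q, g ∘ₗ f = 0 → ∃ h : P →ₗ[R] Q, g = h ∘ₗ f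

/-- `M` is strongly Gorenstein flat: there is an exact complex
`⋯ → F → F → F → ⋯` with a single flat `F` and single differential `f`,
which stays exact under `- ⊗ I` for every injective `I`, and `M ≅ Im f`. -/
def IsSGFlat (M : Type u) [AddCommGroup M] [Module R M] : Prop :=
  ∃ F : ModuleCat.{u} R, Module.Flat R F ∧
    ∃ f : F →ₗ[R] F, f ∘ₗ f = 0 ∧ LinearMap.ker f = LinearMap.range f ∧
      Nonempty (M ≃ₗ[R] LinearMap.range f) ∧
      ∀ I : ModuleCat.{u} R, Module.Injective R I →
        LinearMap.ker (LinearMap.rTensor I f) = LinearMap.range (LinearMap.rTensor I f)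

/-- `M` is Gorenstein projective: it is a syzygy of a totally acyclic complex of
projective modules. -/
def IsGProjective (M : Type u) [AddCommGroup M] [Module R M] : Prop :=
  ∃ (P : ℤ → ModuleCat.{u} R) (d : ∀ i : ℤ, P (i + 1) →ₗ[R] P i),
    (∀ i, Module.Projective R (P i)) ∧
    (∀ i, d i ∘ₗ d (i + 1) = 0) ∧
    (∀ i, LinearMap.ker (d i) = LinearMap.range (d (i + 1))) ∧
    Nonempty (M ≃ₗ[R] LinearMap.range (d 0)) ∧
    ∀ Q : ModuleCat.{u} R, Module.Projective R Q →
      ∀ (i : ℤ) (g : P (i + 1) →ₗ[R] Q), g ∘ₗ d (i + 1) = 0 →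
        ∃ h : P i →ₗ[R] Q, g = h ∘ₗ d i

/-- `M` is Gorenstein flat: it is a syzygy of an exact complex of flat modules
which stays exact under `- ⊗ I` for every injective `I`. -/
def IsGFlat (M : Type u) [AddCommGroup M] [Module R M] : Prop :=
  ∃ (F : ℤ → ModuleCat.{u} R) (d : ∀ i : ℤ, F (i + 1) →ₗ[R] F i),
    (∀ i, Module.Flat R (F i)) ∧
    (∀ i, d i ∘ₗ d (i + 1) = 0) ∧
    (∀ i, LinearMap.ker (d i) = LinearMap.range (d (i + 1))) ∧
    Nonempty (M ≃ₗ[R] LinearMap.range (d 0)) ∧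
    ∀ I : ModuleCat.{u} R, Module.Injective R I →
      ∀ i : ℤ, LinearMap.ker (LinearMap.rTensor I (d i)) =
        LinearMap.range (LinearMap.rTensor I (d (i + 1)))

/-- A class of `R`-modules is projectively resolving if it contains the projectives and,
in every short exact sequence `0 → A → B → C → 0` with `C` in the class, `A` is in the
class iff `B` is. -/
def ProjResolving (X : ModuleCat.{u} R → Prop) : Prop :=
  (∀ P : ModuleCat.{u} R, Module.Projective R P → X P) ∧
  ∀ (A B C : ModuleCat.{u} R) (i : A →ₗ[R] B) (p : B →ₗ[R] C),
    Function.Injective i → Function.Surjective p → LinearMap.range i = LinearMap.ker p →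
      X C → (X A ↔ X B)

/-- Gorenstein projective dimension at most `n`. -/
def GpdLE : ℕ → ModuleCat.{u} R → Prop
  | 0, M => IsGProjective R M
  | n + 1, M => ∃ (G : ModuleCat.{u} R) (p : G →ₗ[R] M),
      IsGProjective R G ∧ Function.Surjective p ∧ GpdLE n (ModuleCat.of R (LinearMap.ker p))

/-- Gorenstein flat dimension at most `n`. -/
def GfdLE : ℕ → ModuleCat.{u} R → Prop
  | 0, M => IsGFlat R M
  | n + 1, M => ∃ (G : ModuleCat.{u} R) (p : G →ₗ[R] M),
      IsGFlat R G ∧ Function.Surjective p ∧ GfdLE n (ModuleCat.of R (LinearMap.ker p))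

/-- Flat dimension at most `n`. -/
def FlatDimLE : ℕ → ModuleCat.{u} R → Prop
  | 0, M => Module.Flat R M
  | n + 1, M => ∃ (G : ModuleCat.{u} R) (p : G →ₗ[R] M),
      Module.Flat R G ∧ Function.Surjective p ∧ FlatDimLE n (ModuleCat.of R (LinearMap.ker p))

/-- Projective dimension at most `n`. -/
def ProjDimLE : ℕ → ModuleCat.{u} R → Prop
  | 0, M => Module.Projective R M
  | n + 1, M => ∃ (G : ModuleCat.{u} R) (p : G →ₗ[R] M),
      Module.Projective R G ∧ Function.Surjective p ∧
        ProjDimLE n (ModuleCat.of R (LinearMap.ker p))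

/-- `R` is a coherent ring: every finitely generated ideal is finitely presented. -/
def IsCoherent : Prop :=
  ∀ I : Ideal R, I.FG → Module.FinitePresentation R I

end Defs

section Aux

variable {R : Type u} [CommRing R]
variable {A B C M M' Q : Type u}
  [AddCommGroup A] [Module R A] [AddCommGroup B] [Module R B]
  [AddCommGroup C] [Module R C] [AddCommGroup M] [Module R M]
  [AddCommGroup M'] [Module R M'] [AddCommGroup Q] [Module R Q]

/-- factor a map through a surjection whose kernel it kills -/
theorem lift_of_surj (q : B →ₗ[R] C) (hq : Function.Surjective q)
    {E : Type u} [AddCommGroup E] [Module R E] (β : B →ₗ[R] E)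
    (h : LinearMap.ker q ≤ LinearMap.ker β) :
    ∃ s : C →ₗ[R] E, s ∘ₗ q = β := by
  refine ⟨(LinearMap.ker q).liftQ β h ∘ₗ (q.quotKerEquivOfSurjective hq).symm.toLinearMap, ?_⟩
  ext b
  have h1 : (q.quotKerEquivOfSurjective hq).symm (q b) = Submodule.Quotient.mk b := by
    rw [LinearEquiv.symm_apply_eq]
    rfl
  simp only [LinearMap.comp_apply, LinearEquiv.coe_coe, h1]
  rfl

theorem ext1Zero_of_projective (hC : Module.Projective R C) : Ext1Zero R C Q := by
  intro E i p hi hp he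
  exact Module.projective_lifting_property p LinearMap.id hp

theorem ext1Zero_congr (e : M ≃ₗ[R] M') (h : Ext1Zero R M Q) : Ext1Zero R M' Q := by
  intro E i p hi hp he
  obtain ⟨s, hs⟩ := h E i (e.symm.toLinearMap ∘ₗ p) hi
    (fun m => by obtain ⟨x, hx⟩ := hp (e m); exact ⟨x, by simp [hx]⟩)
    (by rw [he]; ext x; simp [LinearMap.mem_ker])
  refine ⟨s ∘ₗ e.symm.toLinearMap, ?_⟩
  ext x
  have := congrArg (fun f => e (f (e.symm x))) (congrArg (fun t => t) hs)
  simpa using congrArg e (LinearMap.congr_fun hs (e.symm x))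

/-- a split surjection decomposes the source -/
noncomputable def splitEquiv (π : M →ₗ[R] C) (σ : C →ₗ[R] M)
    (hσ : π ∘ₗ σ = LinearMap.id) :
    (LinearMap.ker π × C) ≃ₗ[R] M := by
  refine LinearEquiv.ofBijective
    ((LinearMap.ker π).subtype ∘ₗ LinearMap.fst R _ C + σ ∘ₗ LinearMap.snd R _ C) ⟨?_, ?_⟩
  · rintro ⟨⟨k, hk⟩, c⟩ ⟨⟨k', hk'⟩, c'⟩ h
    simp only [LinearMap.add_apply, LinearMap.comp_apply, LinearMap.fst_apply,
      LinearMap.snd_apply, Submodule.coe_subtype] at h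
    have hc : c = c' := by
      have := congrArg π h
      have e1 : π (σ c) = c := LinearMap.congr_fun hσ c
      have e2 : π (σ c') = c' := LinearMap.congr_fun hσ c'
      simpa [LinearMap.mem_ker.mp hk, LinearMap.mem_ker.mp hk', e1, e2] using this
    subst hc
    have : k = k' := by simpa using h
    simp [this]
  · intro m
    refine ⟨⟨⟨m - σ (π m), ?_⟩, π m⟩, ?_⟩
    · have e1 : π (σ (π m)) = π m := LinearMap.congr_fun hσ (π m)
      simp [LinearMap.mem_ker, e1]
    · simp

/-- inverse along an injection: given `θ` with values in `range i`, factor `θ = i ∘ ψ`. -/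
noncomputable def corestrictInv {E : Type u} [AddCommGroup E] [Module R E]
    (i : Q →ₗ[R] E) (hi : Function.Injective i) (θ : B →ₗ[R] E)
    (hθ : ∀ b, θ b ∈ LinearMap.range i) : B →ₗ[R] Q :=
  (LinearEquiv.ofInjective i hi).symm.toLinearMap ∘ₗ
    LinearMap.codRestrict (LinearMap.range i) θ hθ

theorem corestrictInv_spec {E : Type u} [AddCommGroup E] [Module R E]
    (i : Q →ₗ[R] E) (hi : Function.Injective i) (θ : B →ₗ[R] E)
    (hθ : ∀ b, θ b ∈ LinearMap.range i) (b : B) :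
    i (corestrictInv i hi θ hθ b) = θ b := by
  have key : ∀ y : LinearMap.range i, i ((LinearEquiv.ofInjective i hi).symm y) = (y : E) := by
    intro y
    conv_rhs => rw [← (LinearEquiv.ofInjective i hi).apply_symm_apply y]
    rfl
  exact key _

/-- Lemma ONE: extension property along a projective presentation implies Ext¹ = 0. -/
theorem ext1Zero_of_ext_prop (j : A →ₗ[R] B) (q : B →ₗ[R] C)
    (hB : Module.Projective R B) (hq : Function.Surjective q)
    (hr : LinearMap.range j = LinearMap.ker q)
    (hext : ∀ φ : A →ₗ[R] Q, ∃ ψ : B →ₗ[R] Q, ψ ∘ₗ j = φ) : Ext1Zero R C Q := by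
  intro E iQ p hiQ hp he
  obtain ⟨α, hα⟩ := Module.projective_lifting_property (M := E) p q hp
  have hmem : ∀ a : A, α (j a) ∈ LinearMap.range iQ := by
    intro a
    rw [he, LinearMap.mem_ker]
    have : q (j a) = 0 := by
      have : j a ∈ LinearMap.ker q := hr ▸ LinearMap.mem_range_self j a
      exact this
    calc p (α (j a)) = q (j a) := LinearMap.congr_fun hα (j a)
      _ = 0 := this
  obtain ⟨ψ, hψ⟩ := hext (corestrictInv iQ hiQ (α ∘ₗ j) hmem)
  set β := α - iQ ∘ₗ ψ with hβ
  have hker : LinearMap.ker q ≤ LinearMap.ker β := by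
    rw [← hr]
    rintro _ ⟨a, rfl⟩
    have h1 : iQ (ψ (j a)) = α (j a) := by
      have := corestrictInv_spec iQ hiQ (α ∘ₗ j) hmem a
      rw [← LinearMap.congr_fun hψ a] at this
      simpa using this
    simp [β, h1]
  obtain ⟨s, hs⟩ := lift_of_surj q hq β hker
  refine ⟨s, ?_⟩
  ext c
  obtain ⟨b, rfl⟩ := hq c
  have h1 : s (q b) = β b := LinearMap.congr_fun hs b
  have h2 : p (iQ (ψ b)) = 0 := by
    have : iQ (ψ b) ∈ LinearMap.ker p := he ▸ LinearMap.mem_range_self iQ (ψ b)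
    exact this
  have h3 : p (α b) = q b := LinearMap.congr_fun hα b
  simp only [LinearMap.comp_apply, LinearMap.id_apply, h1, hβ, LinearMap.sub_apply, map_sub,
    h2, h3, sub_zero]

/-- Lemma TWO (pushout): Ext¹ = 0 gives the extension property along any SES. -/
theorem ext_prop_of_ext1Zero (j : A →ₗ[R] B) (q : B →ₗ[R] C)
    (hj : Function.Injective j) (hq : Function.Surjective q)
    (hr : LinearMap.range j = LinearMap.ker q)
    (h : Ext1Zero R C Q) (φ : A →ₗ[R] Q) : ∃ ψ : B →ₗ[R] Q, ψ ∘ₗ j = φ := by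
  classical
  set T : Submodule R (Q × B) := LinearMap.range (LinearMap.prod φ (-j)) with hT
  set E := ModuleCat.of R ((Q × B) ⧸ T) with hE
  set mk : (Q × B) →ₗ[R] E := T.mkQ with hmk
  set iE : Q →ₗ[R] E := mk ∘ₗ LinearMap.inl R Q B with hiE
  have hTmem : ∀ a : A, (φ a, -j a) ∈ T := fun a => ⟨a, rfl⟩
  have hkill : ∀ x ∈ T, (q ∘ₗ LinearMap.snd R Q B) x = 0 := by
    rintro _ ⟨a, rfl⟩
    have : j a ∈ LinearMap.ker q := hr ▸ LinearMap.mem_range_self j a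
    simpa using (by simpa using this : q (j a) = 0)
  set pE : E →ₗ[R] C := T.liftQ (q ∘ₗ LinearMap.snd R Q B) hkill with hpE
  have hliftmk : ∀ x : Q × B, pE (mk x) = q x.2 := fun x => rfl
  have hiEinj : Function.Injective iE := by
    rw [injective_iff_map_eq_zero]
    intro x hx
    have hx' : ((x, 0) : Q × B) ∈ T := by
      rwa [show iE x = T.mkQ (x, 0) from rfl, Submodule.mkQ_apply,
        Submodule.Quotient.mk_eq_zero] at hx
    obtain ⟨a, ha⟩ := hx'
    have ha' : (φ a, -j a) = (x, 0) := by simpa using ha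
    have ha0 : a = 0 := by
      have h1 := congrArg Prod.snd ha'
      simp only [Prod.snd, neg_eq_zero] at h1
      exact hj (by simpa using h1)
    have h2 := congrArg Prod.fst ha'
    simp only [ha0, map_zero] at h2
    exact h2.symm
  have hpEsurj : Function.Surjective pE := by
    intro c
    obtain ⟨b, rfl⟩ := hq c
    exact ⟨mk (0, b), hliftmk (0, b)⟩
  have hrange : LinearMap.range iE = LinearMap.ker pE := by
    apply le_antisymm
    · rintro _ ⟨x, rfl⟩
      rw [LinearMap.mem_ker]
      show pE (mk (x, 0)) = 0
      rw [hliftmk]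
      simp
    · rintro e he'
      obtain ⟨⟨x, b⟩, rfl⟩ := Submodule.Quotient.mk_surjective T e
      have hqb : q b = 0 := by rw [← hliftmk (x, b)]; exact LinearMap.mem_ker.mp he'
      obtain ⟨a, ha⟩ : b ∈ LinearMap.range j := hr ▸ hqb
      refine ⟨x + φ a, ?_⟩
      have : ((x + φ a, 0) : Q × B) - (x, b) = (φ a, -j a) := by
        rw [← ha]; ext <;> simp
      have hmem : ((x + φ a, 0) : Q × B) - (x, b) ∈ T := this ▸ hTmem a
      simp only [iE, mk, LinearMap.comp_apply, LinearMap.inl_apply]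
      exact ((Submodule.Quotient.eq T).mpr hmem)
  obtain ⟨s, hs⟩ := h E iE pE hiEinj hpEsurj hrange
  set θ : B →ₗ[R] E := mk ∘ₗ LinearMap.inr R Q B - s ∘ₗ q with hθ
  have hθmem : ∀ b, θ b ∈ LinearMap.range iE := by
    intro b
    rw [hrange, LinearMap.mem_ker]
    have h1 : pE (mk (0, b)) = q b := hliftmk (0, b)
    have h2 : pE (s (q b)) = q b := LinearMap.congr_fun hs (q b)
    simp [θ, mk, h1, h2]
  refine ⟨corestrictInv iE hiEinj θ hθmem, ?_⟩
  ext a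
  apply hiEinj
  have hqja : q (j a) = 0 := by
    have : j a ∈ LinearMap.ker q := hr ▸ LinearMap.mem_range_self j a
    exact this
  have h1 : θ (j a) = mk (0, j a) := by simp [θ, hqja]
  have h2 : mk ((0 : Q), j a) = iE (φ a) := by
    show T.mkQ ((0 : Q), j a) = T.mkQ (φ a, (0 : B))
    rw [Submodule.mkQ_apply, Submodule.mkQ_apply]
    refine (Submodule.Quotient.eq T).mpr ?_
    have heq : ((0 : Q), j a) - (φ a, 0) = ((φ (-a), -j (-a)) : Q × B) := by ext <;> simp
    exact heq ▸ hTmem (-a)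
  calc iE ((corestrictInv iE hiEinj θ hθmem ∘ₗ j) a) = θ (j a) :=
        corestrictInv_spec iE hiEinj θ hθmem (j a)
    _ = iE (φ a) := by rw [h1, h2]

/-- Ext¹-vanishing is closed under extensions. -/
theorem ext1Zero_extclosed {X : Type u} [AddCommGroup X] [Module R X]
    (j : A →ₗ[R] X) (q : X →ₗ[R] B)
    (hj : Function.Injective j) (hq : Function.Surjective q)
    (hr : LinearMap.range j = LinearMap.ker q)
    (hA : Ext1Zero R A Q) (hB : Ext1Zero R B Q) : Ext1Zero R X Q := by
  intro E iQ pp hiQ hpp hrg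
  -- Step 1: restrict the extension to A
  set E₁ : Submodule R E := (LinearMap.range j).comap pp with hE₁
  have hmem₁ : ∀ e : E₁, pp (E₁.subtype e) ∈ LinearMap.range j := fun e => e.2
  set p₁ : E₁ →ₗ[R] A := corestrictInv j hj (pp ∘ₗ E₁.subtype) hmem₁ with hp₁
  have hp₁spec : ∀ e : E₁, j (p₁ e) = pp (e : E) := fun e =>
    corestrictInv_spec j hj (pp ∘ₗ E₁.subtype) hmem₁ e
  set iQ₁ : Q →ₗ[R] E₁ := LinearMap.codRestrict E₁ iQ (fun x => by
    have : pp (iQ x) = 0 := by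
      have : iQ x ∈ LinearMap.ker pp := hrg ▸ LinearMap.mem_range_self iQ x
      exact this
    simp [hE₁, this]) with hiQ₁
  have hiQ₁inj : Function.Injective iQ₁ := fun x y hxy => hiQ (congrArg Subtype.val hxy)
  have hp₁surj : Function.Surjective p₁ := by
    intro a
    obtain ⟨e, he⟩ := hpp (j a)
    refine ⟨⟨e, by simp [hE₁, he]⟩, hj ?_⟩
    rw [hp₁spec]
    exact he
  have hrg₁ : LinearMap.range iQ₁ = LinearMap.ker p₁ := by
    apply le_antisymm
    · rintro _ ⟨x, rfl⟩
      rw [LinearMap.mem_ker]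
      apply hj
      rw [hp₁spec]
      have : iQ x ∈ LinearMap.ker pp := hrg ▸ LinearMap.mem_range_self iQ x
      rw [map_zero]; exact this
    · rintro e he
      have h0 : pp (e : E) = 0 := by
        rw [← hp₁spec e, LinearMap.mem_ker.mp he, map_zero]
      obtain ⟨x, hx⟩ : (e : E) ∈ LinearMap.range iQ := hrg ▸ h0
      exact ⟨x, Subtype.ext hx⟩
  obtain ⟨u₀, hu₀⟩ := hA (ModuleCat.of R E₁) iQ₁ p₁ hiQ₁inj hp₁surj hrg₁
  set u : A →ₗ[R] E := E₁.subtype ∘ₗ u₀ with hu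
  have hppu : ∀ a : A, pp (u a) = j a := by
    intro a
    have h1 : p₁ (u₀ a) = a := LinearMap.congr_fun hu₀ a
    have h2 := hp₁spec (u₀ a)
    rw [h1] at h2
    exact h2.symm
  -- Step 2: quotient by the image of A
  set U : Submodule R E := LinearMap.range u with hU
  set π : E →ₗ[R] (E ⧸ U) := U.mkQ with hπ
  have hkills : ∀ e ∈ U, (q ∘ₗ pp) e = 0 := by
    rintro _ ⟨a, rfl⟩
    have : j a ∈ LinearMap.ker q := hr ▸ LinearMap.mem_range_self j a
    simpa [hppu a] using this
  set qb : (E ⧸ U) →ₗ[R] B := U.liftQ (q ∘ₗ pp) hkills with hqb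
  have hqbmk : ∀ e : E, qb (π e) = q (pp e) := fun e => rfl
  set iQb : Q →ₗ[R] (E ⧸ U) := π ∘ₗ iQ with hiQb
  have hiQbinj : Function.Injective iQb := by
    rw [injective_iff_map_eq_zero]
    intro x hx
    have : iQ x ∈ U := by
      rwa [hiQb, LinearMap.comp_apply, hπ, Submodule.mkQ_apply,
        Submodule.Quotient.mk_eq_zero] at hx
    obtain ⟨a, ha⟩ := this
    have h0 : pp (iQ x) = 0 := by
      have : iQ x ∈ LinearMap.ker pp := hrg ▸ LinearMap.mem_range_self iQ x
      exact this
    have hja : j a = 0 := by rw [← hppu a, ha, h0]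
    have ha0 : a = 0 := hj (by simpa using hja)
    have : iQ x = 0 := by rw [← ha, ha0, map_zero]
    exact hiQ (by simpa using this)
  have hqbsurj : Function.Surjective qb := by
    intro b
    obtain ⟨x, rfl⟩ := hq b
    obtain ⟨e, rfl⟩ := hpp x
    exact ⟨π e, hqbmk e⟩
  have hrgb : LinearMap.range iQb = LinearMap.ker qb := by
    apply le_antisymm
    · rintro _ ⟨x, rfl⟩
      rw [LinearMap.mem_ker, hiQb, LinearMap.comp_apply, hqbmk]
      have h0 : pp (iQ x) = 0 := by
        have : iQ x ∈ LinearMap.ker pp := hrg ▸ LinearMap.mem_range_self iQ x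
        exact this
      rw [h0, map_zero]
    · rintro eb heb
      obtain ⟨e, rfl⟩ := Submodule.Quotient.mk_surjective U eb
      have h0 : q (pp e) = 0 := by
        have := LinearMap.mem_ker.mp heb
        rwa [show (Submodule.Quotient.mk e : E ⧸ U) = π e from rfl, hqbmk] at this
      obtain ⟨a, ha⟩ : pp e ∈ LinearMap.range j := hr ▸ h0
      have hker : pp (e - u a) = 0 := by rw [map_sub, hppu a, ha, sub_self]
      obtain ⟨z, hz⟩ : e - u a ∈ LinearMap.range iQ := hrg ▸ hker
      refine ⟨z, ?_⟩
      rw [hiQb, LinearMap.comp_apply, hz]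
      show π (e - u a) = π e
      rw [map_sub, sub_eq_self]
      rw [hπ, Submodule.mkQ_apply, Submodule.Quotient.mk_eq_zero]
      exact LinearMap.mem_range_self u a
  obtain ⟨v₀, hv₀⟩ := hB (ModuleCat.of R (E ⧸ U)) iQb qb hiQbinj hqbsurj hrgb
  set v : B →ₗ[R] (E ⧸ U) := (v₀ : B →ₗ[R] (E ⧸ U)) with hvdef
  have hv : qb ∘ₗ v = LinearMap.id := hv₀
  -- Step 3: the preimage of v's image splits the original extension
  set W : Submodule R E := (LinearMap.range v).comap π with hW
  set pW : W →ₗ[R] X := pp ∘ₗ W.subtype with hpW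
  have hbij : Function.Bijective pW := by
    constructor
    · rw [injective_iff_map_eq_zero]
      rintro ⟨w, hw⟩ h0
      obtain ⟨b, hb⟩ := hw
      have h1 : qb (π w) = 0 := by
        rw [hqbmk, show pp w = 0 from h0, map_zero]
      have hb0 : b = 0 := by
        have h2 : qb (v b) = b := LinearMap.congr_fun hv b
        rw [hb, h1] at h2
        exact h2.symm
      have hπw : π w = 0 := by rw [← hb, hb0, map_zero]
      have : w ∈ U := by
        rwa [hπ, Submodule.mkQ_apply, Submodule.Quotient.mk_eq_zero] at hπw
      obtain ⟨a, ha⟩ := this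
      have hja : j a = 0 := by rw [← hppu a, ha]; exact h0
      have ha0 : a = 0 := hj (by simpa using hja)
      apply Subtype.ext
      show w = 0
      rw [← ha, ha0, map_zero]
    · intro x
      obtain ⟨e, he⟩ := hpp x
      have h1 : qb (π e - v (q x)) = 0 := by
        have h2 : qb (v (q x)) = q x := LinearMap.congr_fun hv (q x)
        rw [map_sub, hqbmk, he, h2, sub_self]
      obtain ⟨z, hz⟩ : π e - v (q x) ∈ LinearMap.range iQb := hrgb ▸ h1
      have hmem : e - iQ z ∈ W := by
        refine ⟨q x, ?_⟩
        have : π (e - iQ z) = π e - iQb z := by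
          rw [map_sub]; rfl
        rw [this, hz]
        abel
      refine ⟨⟨e - iQ z, hmem⟩, ?_⟩
      have h0 : pp (iQ z) = 0 := by
        have : iQ z ∈ LinearMap.ker pp := hrg ▸ LinearMap.mem_range_self iQ z
        exact this
      show pp (e - iQ z) = x
      rw [map_sub, he, h0, sub_zero]
  refine ⟨W.subtype ∘ₗ (LinearEquiv.ofBijective pW hbij).symm.toLinearMap, ?_⟩
  ext x
  exact (LinearEquiv.ofBijective pW hbij).apply_symm_apply x

/-- Ext¹-vanishing passes to direct factors. -/
theorem ext1Zero_prod_fst (h : Ext1Zero R (A × B) Q) : Ext1Zero R A Q := by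
  intro E iQ p hiQ hp he
  set E' := ModuleCat.of R (E × B) with hE'
  set p' : (E × B) →ₗ[R] A × B := p.prodMap LinearMap.id with hp'
  set iQ' : Q →ₗ[R] (E × B) := LinearMap.inl R E B ∘ₗ iQ with hiQ'
  have hinj : Function.Injective iQ' := by
    intro x y hxy
    exact hiQ (congrArg Prod.fst hxy)
  have hsurj : Function.Surjective p' := by
    rintro ⟨a, b⟩
    obtain ⟨e, he'⟩ := hp a
    exact ⟨(e, b), by simp [hp', he']⟩
  have hrg : LinearMap.range iQ' = LinearMap.ker p' := by
    ext ⟨e, b⟩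
    constructor
    · rintro ⟨x, hx⟩
      have h1 : e = iQ x := (congrArg Prod.fst hx).symm
      have h2 : b = 0 := (congrArg Prod.snd hx).symm
      have h3 : p e = 0 := by
        rw [h1]
        have : iQ x ∈ LinearMap.ker p := he ▸ LinearMap.mem_range_self iQ x
        exact this
      rw [LinearMap.mem_ker]
      have : p' (e, b) = (p e, b) := rfl
      rw [this, h3, h2]
      rfl
    · intro hker
      have h1 : p e = 0 := congrArg Prod.fst (LinearMap.mem_ker.mp hker)
      have h2 : b = 0 := congrArg Prod.snd (LinearMap.mem_ker.mp hker)
      obtain ⟨x, hx⟩ : e ∈ LinearMap.range iQ := he ▸ h1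
      exact ⟨x, by rw [hiQ']; simp [hx, h2]⟩
  obtain ⟨s', hs'⟩ := h E' iQ' p' hinj hsurj hrg
  refine ⟨LinearMap.fst R E B ∘ₗ s' ∘ₗ LinearMap.inl R A B, ?_⟩
  ext a
  have h1 : p' (s' (a, 0)) = (a, 0) := LinearMap.congr_fun hs' (a, 0)
  have h2 : p ((s' (a, 0)).1) = a := by
    have := congrArg Prod.fst h1
    simpa [hp'] using this
  simpa using h2

theorem ext1Zero_prod_snd (h : Ext1Zero R (A × B) Q) : Ext1Zero R B Q := by
  have := ext1Zero_congr (R := R) (M := A × B) (M' := B × A) (Q := Q) (LinearEquiv.prodComm R A B) h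
  exact ext1Zero_prod_fst this

/-- Schanuel's lemma. -/
theorem schanuel {P P' : Type u} [AddCommGroup P] [Module R P] [AddCommGroup P'] [Module R P']
    (jA : A →ₗ[R] P) (qA : P →ₗ[R] C) (jB : B →ₗ[R] P') (qB : P' →ₗ[R] C)
    (hP : Module.Projective R P) (hP' : Module.Projective R P')
    (hjA : Function.Injective jA) (hqA : Function.Surjective qA)
    (hrA : LinearMap.range jA = LinearMap.ker qA)
    (hjB : Function.Injective jB) (hqB : Function.Surjective qB)
    (hrB : LinearMap.range jB = LinearMap.ker qB) :
    Nonempty ((A × P') ≃ₗ[R] (B × P)) := by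
  set D : (P × P') →ₗ[R] C := qA ∘ₗ LinearMap.fst R P P' - qB ∘ₗ LinearMap.snd R P P' with hD
  set X : Submodule R (P × P') := LinearMap.ker D with hX
  have hmemX : ∀ x : P × P', x ∈ X ↔ qA x.1 = qB x.2 := by
    intro x
    rw [hX, LinearMap.mem_ker, hD]
    show qA x.1 - qB x.2 = 0 ↔ _
    rw [sub_eq_zero]
  set π₁ : X →ₗ[R] P := LinearMap.fst R P P' ∘ₗ X.subtype with hπ₁
  set π₂ : X →ₗ[R] P' := LinearMap.snd R P P' ∘ₗ X.subtype with hπ₂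
  have hπ₁surj : Function.Surjective π₁ := by
    intro x
    obtain ⟨y, hy⟩ := hqB (qA x)
    exact ⟨⟨(x, y), (hmemX (x, y)).mpr hy.symm⟩, rfl⟩
  have hπ₂surj : Function.Surjective π₂ := by
    intro y
    obtain ⟨x, hx⟩ := hqA (qB y)
    exact ⟨⟨(x, y), (hmemX (x, y)).mpr hx⟩, rfl⟩
  obtain ⟨σ₁, hσ₁⟩ := Module.projective_lifting_property π₁ LinearMap.id hπ₁surj
  obtain ⟨σ₂, hσ₂⟩ := Module.projective_lifting_property π₂ LinearMap.id hπ₂surj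
  -- A ≃ ker π₂
  have memX_A : ∀ a : A, ((jA a, 0) : P × P') ∈ X := by
    intro a
    refine (hmemX _).mpr ?_
    show qA (jA a) = qB 0
    have : jA a ∈ LinearMap.ker qA := hrA ▸ LinearMap.mem_range_self jA a
    simpa using this
  set fA : A →ₗ[R] LinearMap.ker π₂ :=
    LinearMap.codRestrict (LinearMap.ker π₂)
      (LinearMap.codRestrict X (LinearMap.inl R P P' ∘ₗ jA) (fun a => memX_A a))
      (fun a => rfl) with hfA
  have hfAbij : Function.Bijective fA := by
    constructor
    · intro a a' h
      exact hjA (congrArg (fun z : LinearMap.ker π₂ => z.1.1.1) h)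
    · rintro ⟨⟨⟨x, y⟩, hxy⟩, hz⟩
      have hy : y = 0 := hz
      have hx : qA x = 0 := by
        have := (hmemX (x, y)).mp hxy
        rw [hy] at this
        simpa using this
      obtain ⟨a, ha⟩ : x ∈ LinearMap.range jA := hrA ▸ hx
      exact ⟨a, Subtype.ext (Subtype.ext (Prod.ext ha hy.symm))⟩
  -- B ≃ ker π₁
  have memX_B : ∀ b : B, ((0, jB b) : P × P') ∈ X := by
    intro b
    refine (hmemX _).mpr ?_
    show qA 0 = qB (jB b)
    have : jB b ∈ LinearMap.ker qB := hrB ▸ LinearMap.mem_range_self jB b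
    simp only [map_zero]
    exact (LinearMap.mem_ker.mp this).symm
  set fB : B →ₗ[R] LinearMap.ker π₁ :=
    LinearMap.codRestrict (LinearMap.ker π₁)
      (LinearMap.codRestrict X (LinearMap.inr R P P' ∘ₗ jB) (fun b => memX_B b))
      (fun b => rfl) with hfB
  have hfBbij : Function.Bijective fB := by
    constructor
    · intro b b' h
      exact hjB (congrArg (fun z : LinearMap.ker π₁ => z.1.1.2) h)
    · rintro ⟨⟨⟨x, y⟩, hxy⟩, hz⟩
      have hx : x = 0 := hz
      have hy : qB y = 0 := by
        have := (hmemX (x, y)).mp hxy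
        rw [hx] at this
        simpa using this.symm
      obtain ⟨b, hb⟩ : y ∈ LinearMap.range jB := hrB ▸ hy
      exact ⟨b, Subtype.ext (Subtype.ext (Prod.ext hx.symm hb))⟩
  exact ⟨(((LinearEquiv.ofBijective fA hfAbij).prodCongr (LinearEquiv.refl R P')).trans
    (splitEquiv π₂ σ₂ hσ₂)).trans (((splitEquiv π₁ σ₁ hσ₁).symm).trans
      ((LinearEquiv.ofBijective fB hfBbij).symm.prodCongr (LinearEquiv.refl R P)))⟩

theorem projective_prod {P P' : Type u} [AddCommGroup P] [Module R P]
    [AddCommGroup P'] [Module R P'] (hP : Module.Projective R P)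
    (hP' : Module.Projective R P') : Module.Projective R (P × P') := by
  haveI := hP; haveI := hP'; infer_instance

/-- `Ext^{m+1}(C, Q) = 0`, via syzygies. -/
def EZ (R : Type u) [CommRing R] : ℕ → ModuleCat.{u} R → ModuleCat.{u} R → Prop
  | 0, C, Q => Ext1Zero R C Q
  | m + 1, C, Q => ∃ (A P : ModuleCat.{u} R) (j : A →ₗ[R] P) (q : P →ₗ[R] C),
      Module.Projective R P ∧ Function.Injective j ∧ Function.Surjective q ∧
      LinearMap.range j = LinearMap.ker q ∧ EZ R m A Q

variable {Q' : ModuleCat.{u} R}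

theorem EZ_congr : ∀ (m : ℕ) {M M' : Type u} [AddCommGroup M] [Module R M]
    [AddCommGroup M'] [Module R M'] (_ : M ≃ₗ[R] M'),
    EZ R m (ModuleCat.of R M) Q' → EZ R m (ModuleCat.of R M') Q'
  | 0, M, M', _, _, _, _, e, h => ext1Zero_congr e h
  | m + 1, M, M', _, _, _, _, e, ⟨A, P, j, q, hP, hj, hq, hr, hA⟩ =>
    ⟨A, P, j, e.toLinearMap ∘ₗ q, hP, hj,
      e.surjective.comp hq, by
        rw [hr, LinearMap.ker_comp, LinearEquiv.ker, Submodule.comap_bot], hA⟩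

theorem EZ_proj : ∀ (m : ℕ) {C : Type u} [AddCommGroup C] [Module R C],
    Module.Projective R C → EZ R m (ModuleCat.of R C) Q'
  | 0, C, _, _, hC => ext1Zero_of_projective hC
  | m + 1, C, _, _, hC =>
    ⟨ModuleCat.of R PUnit.{u+1}, ModuleCat.of R C, 0, LinearMap.id, hC,
      fun a b _ => Subsingleton.elim a b, fun c => ⟨c, rfl⟩, by
        rw [LinearMap.range_zero, LinearMap.ker_id], EZ_proj m inferInstance⟩

/-- Adding a projective direct summand preserves `EZ`. -/
theorem EZ_sum (m : ℕ) {A P : Type u} [AddCommGroup A] [Module R A]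
    [AddCommGroup P] [Module R P] (hP : Module.Projective R P)
    (h : EZ R m (ModuleCat.of R A) Q') : EZ R m (ModuleCat.of R (A × P)) Q' := by
  cases m with
  | zero =>
    exact ext1Zero_extclosed (LinearMap.inl R A P) (LinearMap.snd R A P)
      (fun a b hab => congrArg Prod.fst hab) (fun p => ⟨(0, p), rfl⟩)
      (LinearMap.range_inl R A P) h (ext1Zero_of_projective hP)
  | succ m =>
    obtain ⟨B, P'', j, q, hP'', hj, hq, hr, hB⟩ := h
    refine ⟨B, ModuleCat.of R (P'' × P), LinearMap.inl R P'' P ∘ₗ j,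
      q.prodMap LinearMap.id, projective_prod hP'' hP,
      fun a b hab => hj (congrArg Prod.fst hab),
      fun ap => (hq ap.1).elim (fun x hx => ⟨(x, ap.2), Prod.ext hx rfl⟩), ?_, hB⟩
    ext xy
    constructor
    · rintro ⟨b, hb⟩
      have h1 : xy.1 = j b := (congrArg Prod.fst hb).symm
      have h2 : xy.2 = 0 := (congrArg Prod.snd hb).symm
      have h3 : q xy.1 = 0 := by
        rw [h1]
        exact LinearMap.mem_ker.mp (hr ▸ LinearMap.mem_range_self j b)
      exact LinearMap.mem_ker.mpr (Prod.ext h3 h2)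
    · intro hk
      have h1 : q xy.1 = 0 := congrArg Prod.fst (LinearMap.mem_ker.mp hk)
      have h2 : xy.2 = 0 := congrArg Prod.snd (LinearMap.mem_ker.mp hk)
      obtain ⟨b, hb⟩ : xy.1 ∈ LinearMap.range j := hr ▸ h1
      exact ⟨b, Prod.ext hb h2.symm⟩

/-- A projective direct summand can be dropped from `EZ`. -/
theorem EZ_drop : ∀ (m : ℕ) {A P : Type u} [AddCommGroup A] [Module R A]
    [AddCommGroup P] [Module R P], Module.Projective R P →
    EZ R m (ModuleCat.of R (A × P)) Q' → EZ R m (ModuleCat.of R A) Q'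
  | 0, A, P, _, _, _, _, _, h => ext1Zero_prod_fst h
  | m + 1, A, P, _, _, _, _, hP, h => by
    obtain ⟨B, P'', j, q, hP'', hj, hq, hr, hB⟩ := h
    set q₂ : P'' →ₗ[R] A := LinearMap.fst R A P ∘ₗ q with hq₂
    have hq₂surj : Function.Surjective q₂ := by
      intro a
      obtain ⟨x, hx⟩ := hq (a, 0)
      exact ⟨x, congrArg Prod.fst hx⟩
    set K : Submodule R P'' := LinearMap.ker q₂ with hK
    set π : K →ₗ[R] P := LinearMap.snd R A P ∘ₗ q ∘ₗ K.subtype with hπ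
    have hπsurj : Function.Surjective π := by
      intro y
      obtain ⟨x, hx⟩ := hq (0, y)
      exact ⟨⟨x, LinearMap.mem_ker.mpr (congrArg Prod.fst hx)⟩, congrArg Prod.snd hx⟩
    obtain ⟨σ, hσ⟩ := Module.projective_lifting_property π LinearMap.id hπsurj
    have hqj0 : ∀ b : B, q (j b) = 0 :=
      fun b => LinearMap.mem_ker.mp (hr ▸ LinearMap.mem_range_self j b)
    have hmem1 : ∀ b : B, j b ∈ K :=
      fun b => LinearMap.mem_ker.mpr (congrArg Prod.fst (hqj0 b))
    set g : B →ₗ[R] LinearMap.ker π :=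
      LinearMap.codRestrict (LinearMap.ker π) (LinearMap.codRestrict K j hmem1)
        (fun b => congrArg Prod.snd (hqj0 b)) with hg
    have hgbij : Function.Bijective g := by
      constructor
      · intro a b hab
        exact hj (congrArg (fun z : LinearMap.ker π => z.1.1) hab)
      · rintro ⟨⟨x, hxK⟩, hxπ⟩
        have h1 : (q x).1 = 0 := hxK
        have h2 : (q x).2 = 0 := hxπ
        have h3 : q x = 0 := Prod.ext h1 h2
        obtain ⟨b, hb⟩ : x ∈ LinearMap.range j := hr ▸ LinearMap.mem_ker.mpr h3
        exact ⟨b, Subtype.ext (Subtype.ext hb)⟩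
    have hKsum : EZ R m (ModuleCat.of R K) Q' :=
      EZ_congr m (((LinearEquiv.ofBijective g hgbij).prodCongr (LinearEquiv.refl R P)).trans
        (splitEquiv π σ hσ)) (EZ_sum m hP hB)
    exact ⟨ModuleCat.of R K, P'', K.subtype, q₂, hP'',
      Subtype.coe_injective, hq₂surj, Submodule.range_subtype K, hKsum⟩

/-- Schanuel transfer: `EZ` is independent of the chosen projective presentation. -/
theorem EZ_transfer (m : ℕ) {A A' P P' C : Type u}
    [AddCommGroup A] [Module R A] [AddCommGroup A'] [Module R A']
    [AddCommGroup P] [Module R P] [AddCommGroup P'] [Module R P']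
    [AddCommGroup C] [Module R C]
    (j : A →ₗ[R] P) (q : P →ₗ[R] C) (j' : A' →ₗ[R] P') (q' : P' →ₗ[R] C)
    (hP : Module.Projective R P) (hP' : Module.Projective R P')
    (hj : Function.Injective j) (hq : Function.Surjective q)
    (hr : LinearMap.range j = LinearMap.ker q)
    (hj' : Function.Injective j') (hq' : Function.Surjective q')
    (hr' : LinearMap.range j' = LinearMap.ker q')
    (h : EZ R m (ModuleCat.of R A) Q') : EZ R m (ModuleCat.of R A') Q' := by
  obtain ⟨e⟩ := schanuel j q j' q' hP hP' hj hq hr hj' hq' hr'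
  exact EZ_drop m hP (EZ_congr m e (EZ_sum m hP' h))

/-- Dimension shifting downwards along a projective presentation. -/
theorem EZ_shiftdown (m : ℕ) {A P C : Type u}
    [AddCommGroup A] [Module R A] [AddCommGroup P] [Module R P] [AddCommGroup C] [Module R C]
    (j : A →ₗ[R] P) (q : P →ₗ[R] C)
    (hP : Module.Projective R P)
    (hj : Function.Injective j) (hq : Function.Surjective q)
    (hr : LinearMap.range j = LinearMap.ker q)
    (h : EZ R (m + 1) (ModuleCat.of R C) Q') : EZ R m (ModuleCat.of R A) Q' := by
  obtain ⟨A', P', j', q', hP', hj', hq', hr', hA'⟩ := h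
  exact EZ_transfer m j' q' j q hP' hP hj' hq' hr' hj hq hr hA'

/-- The middle configuration: given a SES `A → X → B` and a surjection `f : P ↠ X`,
the submodule `L = ker (qX ∘ f)` fits in a SES `ker f → L → A`. -/
theorem mid_config {A X P B' : Type u}
    [AddCommGroup A] [Module R A] [AddCommGroup X] [Module R X]
    [AddCommGroup P] [Module R P] [AddCommGroup B'] [Module R B']
    (j : A →ₗ[R] X) (qX : X →ₗ[R] B') (hj : Function.Injective j)
    (hr : LinearMap.range j = LinearMap.ker qX)
    (f : P →ₗ[R] X) (hf : Function.Surjective f) :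
    ∃ (ι : LinearMap.ker f →ₗ[R] LinearMap.ker (qX ∘ₗ f))
      (aL : LinearMap.ker (qX ∘ₗ f) →ₗ[R] A),
      Function.Injective ι ∧ Function.Surjective aL ∧
        LinearMap.range ι = LinearMap.ker aL := by
  set L : Submodule R P := LinearMap.ker (qX ∘ₗ f) with hL
  have hmem : ∀ l : L, f (L.subtype l) ∈ LinearMap.range j := by
    intro l
    rw [hr, LinearMap.mem_ker]
    exact l.2
  set aL : L →ₗ[R] A := corestrictInv j hj (f ∘ₗ L.subtype) hmem with haL
  have haLspec : ∀ l : L, j (aL l) = f (l : P) :=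
    fun l => corestrictInv_spec j hj (f ∘ₗ L.subtype) hmem l
  set ι : LinearMap.ker f →ₗ[R] L :=
    LinearMap.codRestrict L (LinearMap.ker f).subtype (fun x => by
      rw [hL, LinearMap.mem_ker, LinearMap.comp_apply]
      have hx0 : f ((LinearMap.ker f).subtype x) = 0 := x.2
      rw [hx0, map_zero]) with hι
  refine ⟨ι, aL, fun a b hab => Subtype.ext (congrArg (fun z : L => (z : P)) hab), ?_, ?_⟩
  · intro a
    obtain ⟨x, hx⟩ := hf (j a)
    have hxL : x ∈ L := by
      rw [hL, LinearMap.mem_ker, LinearMap.comp_apply, hx]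
      exact LinearMap.mem_ker.mp (hr ▸ LinearMap.mem_range_self j a)
    refine ⟨⟨x, hxL⟩, hj ?_⟩
    rw [haLspec]
    exact hx
  · apply le_antisymm
    · rintro _ ⟨x, rfl⟩
      rw [LinearMap.mem_ker]
      apply hj
      rw [haLspec, map_zero]
      exact x.2
    · rintro k hk
      have h0 : f (k : P) = 0 := by
        rw [← haLspec k, LinearMap.mem_ker.mp hk, map_zero]
      exact ⟨⟨(k : P), h0⟩, Subtype.ext rfl⟩

/-- Statement X: `EZ m` is closed under extensions. -/
def SX (m : ℕ) (Q' : ModuleCat.{u} R) : Prop :=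
  ∀ (A X B : Type u) [AddCommGroup A] [Module R A] [AddCommGroup X] [Module R X]
    [AddCommGroup B] [Module R B] (j : A →ₗ[R] X) (q : X →ₗ[R] B),
    Function.Injective j → Function.Surjective q →
    LinearMap.range j = LinearMap.ker q →
    EZ R m (ModuleCat.of R A) Q' → EZ R m (ModuleCat.of R B) Q' →
      EZ R m (ModuleCat.of R X) Q'

/-- Statement Z: downward shifting along arbitrary SES. -/
def SZ (m : ℕ) (Q' : ModuleCat.{u} R) : Prop :=
  ∀ (K L A : Type u) [AddCommGroup K] [Module R K] [AddCommGroup L] [Module R L]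
    [AddCommGroup A] [Module R A] (ι : K →ₗ[R] L) (aL : L →ₗ[R] A),
    Function.Injective ι → Function.Surjective aL →
    LinearMap.range ι = LinearMap.ker aL →
    EZ R m (ModuleCat.of R L) Q' → EZ R (m + 1) (ModuleCat.of R A) Q' →
      EZ R m (ModuleCat.of R K) Q'

theorem SZ_of_SX (m : ℕ) (hX : SX m Q') : SZ m Q' := by
  intro K L A _ _ _ _ _ _ ι aL hι haL hrι hL hA
  obtain ⟨A₁, P₁, j₁, q₁, hP₁, hj₁, hq₁, hr₁, hA₁⟩ := hA
  set q₁' : P₁ →ₗ[R] A := (q₁ : P₁ →ₗ[R] A) with hq₁'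
  -- the pullback
  set D : (L × P₁) →ₗ[R] A := aL ∘ₗ LinearMap.fst R L P₁ - q₁' ∘ₗ LinearMap.snd R L P₁ with hD
  set X' : Submodule R (L × P₁) := LinearMap.ker D with hX'
  have hmemX : ∀ z : L × P₁, z ∈ X' ↔ aL z.1 = q₁' z.2 := by
    intro z
    rw [hX', LinearMap.mem_ker, hD]
    show aL z.1 - q₁' z.2 = 0 ↔ _
    rw [sub_eq_zero]
  set πL : X' →ₗ[R] L := LinearMap.fst R L P₁ ∘ₗ X'.subtype with hπL
  set π₂ : X' →ₗ[R] P₁ := LinearMap.snd R L P₁ ∘ₗ X'.subtype with hπ₂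
  have hπLsurj : Function.Surjective πL := by
    intro l
    obtain ⟨p, hp⟩ := hq₁ (aL l)
    exact ⟨⟨(l, p), (hmemX (l, p)).mpr hp.symm⟩, rfl⟩
  have hπ₂surj : Function.Surjective π₂ := by
    intro p
    obtain ⟨l, hl⟩ := haL (q₁' p)
    exact ⟨⟨(l, p), (hmemX (l, p)).mpr hl⟩, rfl⟩
  -- A₁ ≃ ker πL
  have hmemA₁ : ∀ a : A₁, ((0, j₁ a) : L × P₁) ∈ X' := by
    intro a
    refine (hmemX _).mpr ?_
    show aL 0 = q₁' (j₁ a)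
    have : q₁ (j₁ a) = 0 := LinearMap.mem_ker.mp (hr₁ ▸ LinearMap.mem_range_self j₁ a)
    rw [map_zero]
    exact this.symm
  set fA : A₁ →ₗ[R] LinearMap.ker πL :=
    LinearMap.codRestrict (LinearMap.ker πL)
      (LinearMap.codRestrict X' (LinearMap.inr R L P₁ ∘ₗ j₁) (fun a => hmemA₁ a))
      (fun a => rfl) with hfA
  have hfAbij : Function.Bijective fA := by
    constructor
    · intro a b hab
      exact hj₁ (congrArg (fun z : LinearMap.ker πL => z.1.1.2) hab)
    · rintro ⟨⟨⟨l, p⟩, hlp⟩, hz⟩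
      have hl0 : l = 0 := hz
      have hp0 : q₁ p = 0 := by
        have := (hmemX (l, p)).mp hlp
        rw [hl0, map_zero] at this
        exact this.symm
      obtain ⟨a, ha⟩ : p ∈ LinearMap.range j₁ := hr₁ ▸ LinearMap.mem_ker.mpr hp0
      refine ⟨a, Subtype.ext (Subtype.ext ?_)⟩
      show ((0 : L), j₁ a) = (l, p)
      rw [hl0, ha]
    -- end
  have hrfA : LinearMap.range ((LinearMap.ker πL).subtype ∘ₗ fA) = LinearMap.ker πL := by
    rw [LinearMap.range_comp, LinearMap.range_eq_top.mpr hfAbij.2, Submodule.map_top,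
      Submodule.range_subtype]
  have hX'EZ : EZ R m (ModuleCat.of R X') Q' := by
    refine hX A₁ X' L ((LinearMap.ker πL).subtype ∘ₗ fA) πL
      (Subtype.coe_injective.comp hfAbij.1) hπLsurj ?_ hA₁ hL
    rw [hrfA]
  -- split along π₂
  obtain ⟨σ, hσ⟩ := Module.projective_lifting_property π₂ LinearMap.id hπ₂surj
  -- K ≃ ker π₂
  have hmemK : ∀ k : K, ((ι k, 0) : L × P₁) ∈ X' := by
    intro k
    refine (hmemX _).mpr ?_
    show aL (ι k) = q₁' 0
    have : aL (ι k) = 0 := LinearMap.mem_ker.mp (hrι ▸ LinearMap.mem_range_self ι k)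
    rw [this, map_zero]
  set fK : K →ₗ[R] LinearMap.ker π₂ :=
    LinearMap.codRestrict (LinearMap.ker π₂)
      (LinearMap.codRestrict X' (LinearMap.inl R L P₁ ∘ₗ ι) (fun k => hmemK k))
      (fun k => rfl) with hfK
  have hfKbij : Function.Bijective fK := by
    constructor
    · intro a b hab
      exact hι (congrArg (fun z : LinearMap.ker π₂ => z.1.1.1) hab)
    · rintro ⟨⟨⟨l, p⟩, hlp⟩, hz⟩
      have hp0 : p = 0 := hz
      have hl0 : aL l = 0 := by
        have := (hmemX (l, p)).mp hlp
        rw [hp0, map_zero] at this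
        exact this
      obtain ⟨k, hk⟩ : l ∈ LinearMap.range ι := hrι ▸ LinearMap.mem_ker.mpr hl0
      refine ⟨k, Subtype.ext (Subtype.ext ?_)⟩
      show ((ι k : L), (0 : P₁)) = (l, p)
      rw [hk, hp0]
  have : EZ R m (ModuleCat.of R (K × P₁)) Q' :=
    EZ_congr m (((splitEquiv π₂ σ hσ).symm).trans
      (((LinearEquiv.ofBijective fK hfKbij).prodCongr (LinearEquiv.refl R P₁)).symm)) hX'EZ
  exact EZ_drop m hP₁ this

theorem SX_succ_of_SZ (m : ℕ) (hZ : SZ m Q') (hXd : SX m Q') : SX (m + 1) Q' := by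
  intro A X B _ _ _ _ _ _ j q hj hq hr hA hB
  set f : (X →₀ R) →ₗ[R] X := Finsupp.linearCombination R id with hf
  have hfsurj : Function.Surjective f := fun x => ⟨Finsupp.single x 1, by simp [hf]⟩
  have hPproj : Module.Projective R (X →₀ R) := inferInstance
  -- EZ m (ker f) from EZ (m+1) X? no: from shifting down B and A... use L
  set L : Submodule R (X →₀ R) := LinearMap.ker (q ∘ₗ f) with hL
  have hqf : Function.Surjective (q ∘ₗ f) := hq.comp hfsurj
  have hLEZ : EZ R m (ModuleCat.of R L) Q' :=
    EZ_shiftdown m L.subtype (q ∘ₗ f) hPproj Subtype.coe_injective hqf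
      (Submodule.range_subtype L) hB
  obtain ⟨ι, aL, hι, haL, hrι⟩ := mid_config j q hj hr f hfsurj
  have hkerfEZ : EZ R m (ModuleCat.of R (LinearMap.ker f)) Q' :=
    hZ (LinearMap.ker f) L A ι aL hι haL hrι hLEZ hA
  exact ⟨ModuleCat.of R (LinearMap.ker f), ModuleCat.of R (X →₀ R),
    (LinearMap.ker f).subtype, f, hPproj, Subtype.coe_injective, hfsurj,
    Submodule.range_subtype _, hkerfEZ⟩

theorem SX_all : ∀ m : ℕ, SX m Q'
  | 0 => by
    intro A X B _ _ _ _ _ _ j q hj hq hr hA hB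
    exact ext1Zero_extclosed j q hj hq hr hA hB
  | m + 1 => SX_succ_of_SZ m (SZ_of_SX m (SX_all m)) (SX_all m)

theorem SZ_all (m : ℕ) : SZ m Q' := SZ_of_SX m (SX_all m)

/-- LES segment Y: from `Ext^{m+1}(A) = 0` and `Ext^{m+2}(B) = 0` conclude
`Ext^{m+2}(C) = 0` along a SES `A → B → C`. -/
theorem EZ_shiftup (m : ℕ) {A B C : Type u}
    [AddCommGroup A] [Module R A] [AddCommGroup B] [Module R B] [AddCommGroup C] [Module R C]
    (j : A →ₗ[R] B) (q : B →ₗ[R] C)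
    (hj : Function.Injective j) (hq : Function.Surjective q)
    (hr : LinearMap.range j = LinearMap.ker q)
    (hA : EZ R m (ModuleCat.of R A) Q') (hB : EZ R (m + 1) (ModuleCat.of R B) Q') :
    EZ R (m + 1) (ModuleCat.of R C) Q' := by
  set f : (B →₀ R) →ₗ[R] B := Finsupp.linearCombination R id with hf
  have hfsurj : Function.Surjective f := fun x => ⟨Finsupp.single x 1, by simp [hf]⟩
  have hPproj : Module.Projective R (B →₀ R) := inferInstance
  have hkerfEZ : EZ R m (ModuleCat.of R (LinearMap.ker f)) Q' :=
    EZ_shiftdown m (LinearMap.ker f).subtype f hPproj Subtype.coe_injective hfsurj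
      (Submodule.range_subtype _) hB
  obtain ⟨ι, aL, hι, haL, hrι⟩ := mid_config j q hj hr f hfsurj
  have hLEZ : EZ R m (ModuleCat.of R (LinearMap.ker (q ∘ₗ f))) Q' :=
    SX_all m (LinearMap.ker f) (LinearMap.ker (q ∘ₗ f)) A ι aL hι haL hrι hkerfEZ hA
  exact ⟨ModuleCat.of R (LinearMap.ker (q ∘ₗ f)), ModuleCat.of R (B →₀ R),
    (LinearMap.ker (q ∘ₗ f)).subtype, q ∘ₗ f, hPproj, Subtype.coe_injective,
    hq.comp hfsurj, Submodule.range_subtype _, hLEZ⟩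

theorem EZ_of_isGProjective {G : Type u} [AddCommGroup G] [Module R G]
    (hG : IsGProjective R G) (hQ' : Module.Projective R Q') (m : ℕ) :
    EZ R m (ModuleCat.of R G) Q' := by
  obtain ⟨P, d, hproj, hcomp, hker, ⟨e⟩, hfact⟩ := hG
  -- extension property for each syzygy
  have hext : ∀ (j : ℤ) (φ : LinearMap.range (d (j + 1)) →ₗ[R] Q'),
      ∃ ψ : P (j + 1) →ₗ[R] Q', ψ ∘ₗ (LinearMap.range (d (j + 1))).subtype = φ := by
    intro j φ
    set g : P (j + 1 + 1) →ₗ[R] Q' := φ ∘ₗ (d (j + 1)).rangeRestrict with hg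
    have hg0 : g ∘ₗ d (j + 1 + 1) = 0 := by
      ext x
      have h0 : d (j + 1) (d (j + 1 + 1) x) = 0 := LinearMap.congr_fun (hcomp (j + 1)) x
      have h1 : (d (j + 1)).rangeRestrict (d (j + 1 + 1) x) = 0 := Subtype.ext h0
      simp only [LinearMap.comp_apply, LinearMap.zero_apply, hg, h1, map_zero]
    obtain ⟨h, hh⟩ := hfact Q' hQ' (j + 1) g hg0
    refine ⟨h, ?_⟩
    ext k
    obtain ⟨x, hx⟩ := k.2
    have hk : (d (j + 1)).rangeRestrict x = k := Subtype.ext hx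
    calc (h ∘ₗ (LinearMap.range (d (j + 1))).subtype) k = h (d (j + 1) x) := by
          rw [LinearMap.comp_apply]
          exact congrArg h hx.symm
      _ = g x := (LinearMap.congr_fun hh x).symm
      _ = φ k := by rw [hg, LinearMap.comp_apply, hk]
  -- SES data for each syzygy
  have hrangeker : ∀ j : ℤ, LinearMap.range (LinearMap.range (d (j + 1))).subtype =
      LinearMap.ker ((d j).rangeRestrict) := by
    intro j
    rw [LinearMap.ker_rangeRestrict, Submodule.range_subtype, hker]
  -- Ext¹(K j, Q') = 0
  have hE1 : ∀ j : ℤ, Ext1Zero R (LinearMap.range (d j)) Q' := by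
    intro j
    exact ext1Zero_of_ext_prop (LinearMap.range (d (j + 1))).subtype ((d j).rangeRestrict)
      (hproj (j + 1)) (d j).surjective_rangeRestrict (hrangeker j) (hext j)
  -- EZ m (K j) Q' for all m, j
  have hEZK : ∀ (m : ℕ) (j : ℤ), EZ R m (ModuleCat.of R (LinearMap.range (d j))) Q' := by
    intro m
    induction m with
    | zero => exact fun j => hE1 j
    | succ m ih =>
      intro j
      exact ⟨ModuleCat.of R (LinearMap.range (d (j + 1))), P (j + 1),
        (LinearMap.range (d (j + 1))).subtype, (d j).rangeRestrict, hproj (j + 1),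
        Subtype.coe_injective, (d j).surjective_rangeRestrict, hrangeker j, ih (j + 1)⟩
  exact EZ_congr m e.symm (hEZK m 0)

theorem EZ_of_GpdLE (hQ' : Module.Projective R Q') :
    ∀ (n : ℕ) (M : ModuleCat.{u} R), GpdLE R n M → EZ R n M Q'
  | 0, M, h => EZ_of_isGProjective h hQ' 0
  | n + 1, M, ⟨G, p, hG, hp, hGpd⟩ => by
    have ih : EZ R n (ModuleCat.of R (LinearMap.ker p)) Q' :=
      EZ_of_GpdLE hQ' n (ModuleCat.of R (LinearMap.ker p)) hGpd
    exact EZ_shiftup n (LinearMap.ker p).subtype p Subtype.coe_injective hp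
      (Submodule.range_subtype _) ih (EZ_of_isGProjective hG hQ' (n + 1))


end Aux

/-- Over a perfect ring (every flat module is projective) of Gorenstein
global dimension at most `n`, a module `N` admitting a short exact sequence
`0 → N → F → N → 0` with `F` flat satisfies `Ext¹_R(N, P) = 0` for every projective `P`,
hence is strongly Gorenstein projective. -/
theorem stmt16 (R : Type u) [CommRing R]
    (hperf : ∀ M : ModuleCat.{u} R, Module.Flat R M → Module.Projective R M)
    (n : ℕ) (hgl : ∀ M : ModuleCat.{u} R, GpdLE R n M)
    (N : Type u) [AddCommGroup N] [Module R N]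
    (F : ModuleCat.{u} R) (hF : Module.Flat R F)
    (i : N →ₗ[R] F) (p : F →ₗ[R] N)
    (hi : Function.Injective i) (hp : Function.Surjective p)
    (he : LinearMap.range i = LinearMap.ker p) :
    (∀ P : ModuleCat.{u} R, Module.Projective R P → Ext1Zero R N P) ∧
      IsSGProjective R N := by
  have hFproj : Module.Projective R F := hperf F hF
  -- Ext¹(N, Q') = 0 for projective Q'
  have main1 : ∀ P : ModuleCat.{u} R, Module.Projective R P → Ext1Zero R N P := by
    intro Q' hQ'
    have htop : EZ R n (ModuleCat.of R N) Q' := EZ_of_GpdLE hQ' n _ (hgl (ModuleCat.of R N))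
    have hdown : ∀ m : ℕ, EZ R m (ModuleCat.of R N) Q' → EZ R 0 (ModuleCat.of R N) Q' := by
      intro m
      induction m with
      | zero => exact fun h => h
      | succ m ih => exact fun h => ih (EZ_shiftdown m i p hFproj hi hp he h)
    exact hdown n htop
  refine ⟨main1, ?_⟩
  -- the strongly Gorenstein structure
  set f : F →ₗ[R] F := i ∘ₗ p with hfdef
  have hpi : ∀ y : N, p (i y) = 0 := fun y =>
    LinearMap.mem_ker.mp (he ▸ LinearMap.mem_range_self i y)
  have hff : f ∘ₗ f = 0 := by
    ext x
    show i (p (i (p x))) = 0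
    rw [hpi (p x), map_zero]
  have hrangef : LinearMap.range f = LinearMap.range i := by
    rw [hfdef, LinearMap.range_comp, LinearMap.range_eq_top.mpr hp, Submodule.map_top]
  have hkerf : LinearMap.ker f = LinearMap.range f := by
    rw [hrangef]
    ext x
    constructor
    · intro hx
      have h0 : i (p x) = 0 := hx
      have h1 : p x = 0 := hi (by simpa using h0)
      exact he ▸ LinearMap.mem_ker.mpr h1
    · rintro ⟨y, rfl⟩
      rw [LinearMap.mem_ker]
      show i (p (i y)) = 0
      rw [hpi y, map_zero]
  refine ⟨F, hFproj, f, hff, hkerf, ⟨(LinearEquiv.ofInjective i hi).trans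
    (LinearEquiv.ofEq _ _ hrangef.symm)⟩, ?_⟩
  intro Q hQ g hg
  have hgi : ∀ y : N, g (i y) = 0 := by
    intro y
    obtain ⟨x, rfl⟩ := hp y
    exact LinearMap.congr_fun hg x
  obtain ⟨s, hs⟩ := lift_of_surj p hp g (by
    intro x hx
    obtain ⟨y, rfl⟩ : x ∈ LinearMap.range i := he ▸ hx
    exact LinearMap.mem_ker.mpr (hgi y))
  obtain ⟨ψ, hψ⟩ := ext_prop_of_ext1Zero i p hi hp he (main1 Q hQ) s
  refine ⟨ψ, ?_⟩
  ext x
  show g x = ψ (i (p x))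
  have h1 : ψ (i (p x)) = s (p x) := LinearMap.congr_fun hψ (p x)
  have h2 : s (p x) = g x := LinearMap.congr_fun hs x
  rw [h1, h2]
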